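/- For all integers h ≥ 1 and rational x, the quotient of polynomials P₂_h(x,z)/Q₂_h(x,z) has formal power series coefficients [z^n] equal to C(x, n) for all 0 ≤ n ≤ h, where P₂_h(x,z) = Σ_{n=0}^{h-1} C(x+h, n)·C(h-1, n)/C(2h-1, n)·z^n and Q₂_h(x,z) = Σ_{i=0}^{h} C(x-h+i, i)·(h!/(h-i)!)·((2h-1-i)!/(2h-1)!)·(-z)^i. -/

import Mathlib

/-- Generalized binomial coefficient `C(x, k) = x(x-1)⋯(x-k+1)/k!` for rational `x`. -/
noncomputable def gchoose (x : ℚ) (k : ℕ) : ℚ :=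
  (∏ i ∈ Finset.range k, (x - i)) / (Nat.factorial k)

/-- The numerator power series
`P₂_h(x, z) = Σ_{n=0}^{h-1} C(x+h, n) C(h-1, n) / C(2h-1, n) z^n`. -/
noncomputable def P2ser (x : ℚ) (h : ℕ) : PowerSeries ℚ :=
  PowerSeries.mk fun n =>
    if n < h then gchoose (x + h) n * gchoose ((h : ℚ) - 1) n / gchoose (2 * (h : ℚ) - 1) n
    else 0

/-- The denominator power series
`Q₂_h(x, z) = Σ_{i=0}^{h} C(x-h+i, i) (h!/(h-i)!) ((2h-1-i)!/(2h-1)!) (-z)^i`. -/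
noncomputable def Q2ser (x : ℚ) (h : ℕ) : PowerSeries ℚ :=
  PowerSeries.mk fun i =>
    if i ≤ h then
      (-1 : ℚ) ^ i * gchoose (x - h + i) i *
        ((Nat.factorial h : ℚ) / (Nat.factorial (h - i) : ℚ)) *
        ((Nat.factorial (2 * h - 1 - i) : ℚ) / (Nat.factorial (2 * h - 1) : ℚ))
    else 0

lemma gchoose_zero (x : ℚ) : gchoose x 0 = 1 := by simp [gchoose]

lemma gchoose_succ (x : ℚ) (k : ℕ) :
    gchoose x (k+1) = gchoose x k * (x - k) / (k+1) := by
  unfold gchoose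
  rw [Finset.prod_range_succ, Nat.factorial_succ]
  have h1 : ((k.factorial : ℚ)) ≠ 0 := Nat.cast_ne_zero.mpr k.factorial_ne_zero
  have h2 : ((k : ℚ) + 1) ≠ 0 := by positivity
  push_cast
  field_simp

lemma gchoose_succ_succ (y : ℚ) (k : ℕ) :
    gchoose (y+1) (k+1) = gchoose y k * (y+1) / (k+1) := by
  unfold gchoose
  rw [Finset.prod_range_succ', Nat.factorial_succ]
  have h0 : ∀ i ∈ Finset.range k, (y + 1 - ((i+1 : ℕ) : ℚ)) = y - i := by
    intro i _; push_cast; ring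
  rw [Finset.prod_congr rfl h0]
  have h1 : ((k.factorial : ℚ)) ≠ 0 := Nat.cast_ne_zero.mpr k.factorial_ne_zero
  have h2 : ((k : ℚ) + 1) ≠ 0 := by positivity
  push_cast
  field_simp
  simp

lemma gchoose_nat (m k : ℕ) : gchoose (m : ℚ) k = m.choose k := by
  induction k with
  | zero => simp [gchoose_zero]
  | succ k ih =>
    rw [gchoose_succ, ih]
    rcases lt_trichotomy k m with hk | hk | hk
    · have : (m.choose (k+1) : ℚ) * (k+1) = m.choose k * ((m : ℚ) - k) := by
        have := Nat.add_one_mul_choose_eq m k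
        have h2 : (m.choose (k+1)) * (k+1) = m.choose k * (m - k) :=
          Nat.choose_succ_right_eq m k
        have h3 : ((m - k : ℕ) : ℚ) = (m : ℚ) - k := by
          rw [Nat.cast_sub hk.le]
        calc (m.choose (k+1) : ℚ) * (k+1) = ((m.choose (k+1)) * (k+1) : ℕ) := by push_cast; ring
        _ = ((m.choose k * (m - k) : ℕ) : ℚ) := by rw [h2]
        _ = m.choose k * ((m : ℚ) - k) := by push_cast [h3]; ring
      have h2 : ((k : ℚ) + 1) ≠ 0 := by positivity
      field_simp
      linarith [this]
    · subst hk
      simp [Nat.choose_succ_self]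
    · have h1 : m.choose (k+1) = 0 := Nat.choose_eq_zero_of_lt (by omega)
      have h2 : m.choose k = 0 := Nat.choose_eq_zero_of_lt hk
      simp [h1, h2]

/-- Nonvanishing of `C(2h-1, i)` for `i ≤ h`. -/
lemma g2h_ne_zero (h i : ℕ) (hh : 1 ≤ h) (hi : i ≤ h) :
    gchoose (2*(h:ℚ)-1) i ≠ 0 := by
  unfold gchoose
  apply div_ne_zero
  · rw [Finset.prod_ne_zero_iff]
    intro j hj
    rw [Finset.mem_range] at hj
    have : (j : ℚ) ≤ (h : ℚ) - 1 := by
      have : j + 1 ≤ h := by omega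
      have := (Nat.cast_le (α := ℚ)).mpr this
      push_cast at this
      linarith
    have hq : (1 : ℚ) ≤ (h : ℚ) := by exact_mod_cast hh
    intro hcon
    have : (2*(h:ℚ)-1 - j) ≥ h := by linarith
    rw [hcon] at this
    linarith
  · exact Nat.cast_ne_zero.mpr i.factorial_ne_zero

/-- Summand of the convolution. -/
noncomputable def Tt (x : ℚ) (h n i : ℕ) : ℚ :=
  (-1)^i * gchoose x (n-i) * gchoose (x - h + i) i * gchoose (h:ℚ) i
    / gchoose (2*(h:ℚ)-1) i

/-- WZ certificate. -/
noncomputable def Gg (x : ℚ) (h n i : ℕ) : ℚ :=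
  (-1)^(i+1) * i * (2*(h:ℚ) - i) * gchoose x (n+1-i) * gchoose (x - h + i) i
    * gchoose (h:ℚ) i / gchoose (2*(h:ℚ)-1) i

lemma wz_step (x : ℚ) (h n i : ℕ) (hh : 1 ≤ h) (hn : n + 1 ≤ h) (hi : i ≤ n) :
    -((x + h - n) * ((h:ℚ) - 1 - n)) * Tt x h n i
      + (2*(h:ℚ) - 1 - n) * ((n:ℚ)+1) * Tt x h (n+1) i
    = Gg x h n (i+1) - Gg x h n i := by
  obtain ⟨m, rfl⟩ : ∃ m, n = m + i := ⟨n - i, by omega⟩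
  unfold Tt Gg
  rw [show m + i - i = m from by omega, show m + i + 1 - i = m + 1 from by omega,
    show m + i + 1 - (i+1) = m from by omega]
  have e1 : gchoose x (m+1) = gchoose x m * (x - m) / (m+1) := gchoose_succ x m
  have e2 : gchoose (x - h + ((i:ℕ)+1 : ℕ)) (i+1)
      = gchoose (x - h + i) i * (x - h + i + 1) / (i+1) := by
    rw [show (x - (h:ℚ) + ((i:ℕ)+1 : ℕ)) = (x - h + i) + 1 from by push_cast; ring,
      gchoose_succ_succ]
  have e3 : gchoose (h:ℚ) (i+1) = gchoose (h:ℚ) i * ((h:ℚ) - i) / (i+1) := gchoose_succ _ i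
  have e4 : gchoose (2*(h:ℚ)-1) (i+1)
      = gchoose (2*(h:ℚ)-1) i * (2*(h:ℚ)-1 - i) / (i+1) := gchoose_succ _ i
  rw [e1, e2, e3, e4]
  have hd : gchoose (2*(h:ℚ)-1) i ≠ 0 := g2h_ne_zero h i hh (by omega)
  have hm1 : ((m:ℚ) + 1) ≠ 0 := by positivity
  have hi1 : ((i:ℚ) + 1) ≠ 0 := by positivity
  have hH : (2*(h:ℚ) - 1 - i) ≠ 0 := by
    have h1 : ((i:ℚ)) + 1 ≤ h := by exact_mod_cast (by omega : i + 1 ≤ h)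
    have h2 : (1:ℚ) ≤ h := by exact_mod_cast hh
    intro hcon; nlinarith
  have hd2 : gchoose ((h:ℚ)*2-1) i ≠ 0 := by rw [mul_comm]; exact hd
  have hH2 : (h:ℚ)*2 - 1 - i ≠ 0 := by rw [mul_comm]; exact hH
  push_cast
  field_simp
  ring

noncomputable def Ss (x : ℚ) (h n : ℕ) : ℚ := ∑ i ∈ Finset.range (n+1), Tt x h n i

noncomputable def Rr (x : ℚ) (h n : ℕ) : ℚ :=
  gchoose (x + h) n * gchoose ((h:ℚ) - 1) n / gchoose (2*(h:ℚ) - 1) n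

lemma Gg_zero (x : ℚ) (h n : ℕ) : Gg x h n 0 = 0 := by
  simp [Gg]

lemma Gg_top (x : ℚ) (h n : ℕ) :
    Gg x h n (n+1) = -((2*(h:ℚ) - 1 - n) * ((n:ℚ)+1) * Tt x h (n+1) (n+1)) := by
  unfold Gg Tt
  rw [show n + 1 - (n+1) = 0 from by omega, gchoose_zero]
  push_cast
  rw [pow_succ, pow_succ]
  ring

lemma Ss_step (x : ℚ) (h n : ℕ) (hh : 1 ≤ h) (hn : n + 1 ≤ h) :
    (2*(h:ℚ) - 1 - n) * ((n:ℚ)+1) * Ss x h (n+1)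
      = (x + h - n) * ((h:ℚ) - 1 - n) * Ss x h n := by
  have tele : ∑ i ∈ Finset.range (n+1), (Gg x h n (i+1) - Gg x h n i)
      = Gg x h n (n+1) - Gg x h n 0 := Finset.sum_range_sub _ _
  have expand : ∑ i ∈ Finset.range (n+1),
      (-((x + h - n) * ((h:ℚ) - 1 - n)) * Tt x h n i
        + (2*(h:ℚ) - 1 - n) * ((n:ℚ)+1) * Tt x h (n+1) i)
      = ∑ i ∈ Finset.range (n+1), (Gg x h n (i+1) - Gg x h n i) := by
    apply Finset.sum_congr rfl
    intro i hi
    exact wz_step x h n i hh hn (by simpa [Nat.lt_succ_iff] using hi)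
  rw [Finset.sum_add_distrib, ← Finset.mul_sum, ← Finset.mul_sum] at expand
  have hS1 : Ss x h (n+1) = (∑ i ∈ Finset.range (n+1), Tt x h (n+1) i) + Tt x h (n+1) (n+1) := by
    unfold Ss
    rw [Finset.sum_range_succ]
  rw [tele, Gg_zero, Gg_top, sub_zero] at expand
  have : ∑ i ∈ Finset.range (n+1), Tt x h n i = Ss x h n := rfl
  rw [this] at expand
  rw [hS1]
  linarith [expand]

lemma key (x : ℚ) (h : ℕ) (hh : 1 ≤ h) : ∀ n, n ≤ h → Ss x h n = Rr x h n := by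
  intro n
  induction n with
  | zero =>
    intro _
    simp [Ss, Rr, Tt, gchoose_zero]
  | succ k ih =>
    intro hk
    have ihk := ih (by omega)
    have hstep := Ss_step x h k hh hk
    rw [ihk] at hstep
    have hd : gchoose (2*(h:ℚ)-1) k ≠ 0 := g2h_ne_zero h k hh (by omega)
    have hd1 : gchoose (2*(h:ℚ)-1) (k+1) ≠ 0 := g2h_ne_zero h (k+1) hh hk
    have hk1 : ((k:ℚ) + 1) ≠ 0 := by positivity
    have hH : (2*(h:ℚ) - 1 - k) ≠ 0 := by
      have h1 : ((k:ℚ)) + 1 ≤ h := by exact_mod_cast hk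
      have h2 : (1:ℚ) ≤ h := by exact_mod_cast hh
      intro hcon; nlinarith
    have hRr : (2*(h:ℚ) - 1 - k) * ((k:ℚ)+1) * Rr x h (k+1)
        = (x + h - k) * ((h:ℚ) - 1 - k) * Rr x h k := by
      unfold Rr
      rw [gchoose_succ (x + h) k, gchoose_succ ((h:ℚ)-1) k, gchoose_succ (2*(h:ℚ)-1) k]
      have : ((h:ℚ) - 1 - k) = (h:ℚ) - 1 - k := rfl
      field_simp
    have hne : (2*(h:ℚ) - 1 - k) * ((k:ℚ)+1) ≠ 0 := mul_ne_zero hH hk1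
    apply mul_left_cancel₀ hne
    rw [hstep, hRr]

lemma gchoose_hm1_h (h : ℕ) (hh : 1 ≤ h) : gchoose ((h:ℚ)-1) h = 0 := by
  unfold gchoose
  rw [Finset.prod_eq_zero (Finset.mem_range.mpr (by omega : h - 1 < h))]
  · simp
  · rw [Nat.cast_sub hh]
    push_cast
    ring

lemma fact_ratio (h i : ℕ) (hh : 1 ≤ h) (hi : i ≤ h) :
    ((Nat.factorial h : ℚ) / (Nat.factorial (h - i) : ℚ)) *
      ((Nat.factorial (2 * h - 1 - i) : ℚ) / (Nat.factorial (2 * h - 1) : ℚ))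
    = gchoose (h:ℚ) i / gchoose (2*(h:ℚ)-1) i := by
  have hcast : (2*(h:ℚ)-1) = ((2*h-1 : ℕ) : ℚ) := by
    rw [Nat.cast_sub (by omega : 1 ≤ 2*h)]
    push_cast; ring
  rw [hcast, gchoose_nat, gchoose_nat]
  have hi2 : i ≤ 2*h-1 := by omega
  have f1 : (h.choose i : ℚ) * (i.factorial : ℚ) * ((h-i).factorial : ℚ)
      = (h.factorial : ℚ) := by
    exact_mod_cast congrArg (Nat.cast : ℕ → ℚ) (Nat.choose_mul_factorial_mul_factorial hi)
  have f2 : ((2*h-1).choose i : ℚ) * (i.factorial : ℚ) * ((2*h-1-i).factorial : ℚ)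
      = ((2*h-1).factorial : ℚ) := by
    exact_mod_cast congrArg (Nat.cast : ℕ → ℚ) (Nat.choose_mul_factorial_mul_factorial hi2)
  have n1 : ((h-i).factorial : ℚ) ≠ 0 := Nat.cast_ne_zero.mpr (Nat.factorial_ne_zero _)
  have n2 : ((2*h-1).factorial : ℚ) ≠ 0 := Nat.cast_ne_zero.mpr (Nat.factorial_ne_zero _)
  have n3 : ((2*h-1-i).factorial : ℚ) ≠ 0 := Nat.cast_ne_zero.mpr (Nat.factorial_ne_zero _)
  have n4 : (i.factorial : ℚ) ≠ 0 := Nat.cast_ne_zero.mpr (Nat.factorial_ne_zero _)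
  have n5 : ((2*h-1).choose i : ℚ) ≠ 0 :=
    Nat.cast_ne_zero.mpr (Nat.choose_pos hi2).ne'
  rw [← f1, ← f2]
  field_simp

lemma Q2ser_coeff (x : ℚ) (h i : ℕ) (hh : 1 ≤ h) (hi : i ≤ h) :
    PowerSeries.coeff i (Q2ser x h)
    = (-1:ℚ)^i * gchoose (x - h + i) i * gchoose (h:ℚ) i / gchoose (2*(h:ℚ)-1) i := by
  rw [Q2ser, PowerSeries.coeff_mk, if_pos hi, mul_assoc, fact_ratio h i hh hi]
  ring

lemma conv_eq (x : ℚ) (h k : ℕ) (hh : 1 ≤ h) (hk : k ≤ h) :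
    PowerSeries.coeff k (Q2ser x h * PowerSeries.mk (gchoose x)) = Ss x h k := by
  rw [PowerSeries.coeff_mul, Finset.Nat.sum_antidiagonal_eq_sum_range_succ_mk]
  unfold Ss
  apply Finset.sum_congr rfl
  intro i hi
  rw [Finset.mem_range, Nat.lt_succ_iff] at hi
  rw [Q2ser_coeff x h i hh (le_trans hi hk), PowerSeries.coeff_mk]
  unfold Tt
  ring

lemma P2ser_coeff_eq (x : ℚ) (h k : ℕ) (hh : 1 ≤ h) (hk : k ≤ h) :
    PowerSeries.coeff k (P2ser x h) = Rr x h k := by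
  rw [P2ser, PowerSeries.coeff_mk]
  rcases lt_or_eq_of_le hk with hlt | heq
  · rw [if_pos hlt]; rfl
  · subst heq
    rw [if_neg (lt_irrefl _)]
    unfold Rr
    rw [gchoose_hm1_h k hh]
    simp

theorem stmt13 (h : ℕ) (hh : 1 ≤ h) (x : ℚ) (n : ℕ) (hn : n ≤ h) :
    PowerSeries.coeff n (P2ser x h * (Q2ser x h)⁻¹) = gchoose x n := by
  set B := PowerSeries.mk (gchoose x) with hB
  set Q := Q2ser x h with hQdef
  set P := P2ser x h with hPdef
  have hQ0 : PowerSeries.constantCoeff Q ≠ 0 := by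
    have : PowerSeries.constantCoeff Q = PowerSeries.coeff 0 Q := by
      rw [← PowerSeries.coeff_zero_eq_constantCoeff]
    rw [this, Q2ser_coeff x h 0 hh (by omega)]
    simp [gchoose_zero]
  have hQinv : Q * Q⁻¹ = 1 := PowerSeries.mul_inv_cancel _ hQ0
  have hDcoeff : ∀ k ≤ h, PowerSeries.coeff k (P - B * Q) = 0 := by
    intro k hk
    rw [map_sub, mul_comm B Q, conv_eq x h k hh hk, P2ser_coeff_eq x h k hh hk,
      key x h hh k hk, sub_self]
  have hsplit : P * Q⁻¹ = B + (P - B * Q) * Q⁻¹ := by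
    have h2 : P * Q⁻¹ = B * (Q * Q⁻¹) + (P - B * Q) * Q⁻¹ := by ring
    rw [h2, hQinv, mul_one]
  rw [hsplit, map_add]
  have hzero : PowerSeries.coeff n ((P - B * Q) * Q⁻¹) = 0 := by
    rw [PowerSeries.coeff_mul]
    apply Finset.sum_eq_zero
    intro p hp
    rw [Finset.HasAntidiagonal.mem_antidiagonal] at hp
    rw [hDcoeff p.1 (by omega), zero_mul]
  rw [hzero, add_zero, hB, PowerSeries.coeff_mk]
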